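/- With the above setup, for every atom ζ_n of μ, the radial limit lim_{r→1} |F(rζ_n)| = +∞, and consequently lim_{r→1} G(rζ_n) = 1. In particular G(rζ) → 1 as r → 1 for μ-almost every ζ ∈ ∂B^d. -/

import Mathlib

open MeasureTheory Filter


lemma aux_re_nonneg (w : ℂ) (hw : ‖w‖ < 1) : 0 ≤ ((1+w)/(1-w)).re := by
  have hns : (0:ℝ) < Complex.normSq (1 - w) := by
    have : (1:ℂ) - w ≠ 0 := by
      intro h
      rw [sub_eq_zero] at h
      rw [← h] at hw
      simp at hw
    exact Complex.normSq_pos.2 this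
  have hw2 : w.re * w.re + w.im * w.im < 1 := by
    have := Complex.sq_norm w
    have h2 : ‖w‖ ^ 2 < 1 := by
      have : ‖w‖ = ‖w‖ := rfl
      nlinarith [norm_nonneg w]
    rw [Complex.normSq_apply] at this; linarith
  rw [Complex.div_re]
  simp only [Complex.add_re, Complex.one_re, Complex.add_im, Complex.one_im,
    Complex.sub_re, Complex.sub_im]
  rw [← add_div]
  apply div_nonneg _ hns.le
  nlinarith

lemma aux_norm_bound (w : ℂ) (r : ℝ) (hw : ‖w‖ ≤ r) (hr : r < 1) :
    ‖(1+w)/(1-w)‖ ≤ (1+r)/(1-r) := by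
  have h0 : (0:ℝ) ≤ r := le_trans (norm_nonneg w) hw
  have h1 : ‖(1:ℂ) + w‖ ≤ 1 + r := by
    calc ‖(1:ℂ) + w‖ ≤ ‖(1:ℂ)‖ + ‖w‖ := norm_add_le _ _
    _ ≤ 1 + r := by rw [norm_one]; linarith
  have h2 : 1 - r ≤ ‖(1:ℂ) - w‖ := by
    have := norm_sub_norm_le (1:ℂ) w
    rw [norm_one] at this; linarith
  rw [norm_div]
  exact div_le_div₀ (by linarith) h1 (by linarith) h2

lemma aux_cs (d : ℕ) (u v : Fin d → ℂ) (hu : ∑ j, ‖u j‖ ^ 2 = 1)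
    (hv : ∑ j, ‖v j‖ ^ 2 = 1) :
    ‖∑ j, u j * (starRingEnd ℂ) (v j)‖ ≤ 1 := by
  let x : EuclideanSpace ℂ (Fin d) := (WithLp.equiv 2 _).symm u
  let y : EuclideanSpace ℂ (Fin d) := (WithLp.equiv 2 _).symm v
  have hx : ‖x‖ = 1 := by
    rw [EuclideanSpace.norm_eq]
    have : ∀ j, ‖x j‖ = ‖u j‖ := fun j => rfl
    simp only [this, hu, Real.sqrt_one]
  have hy : ‖y‖ = 1 := by
    rw [EuclideanSpace.norm_eq]
    have : ∀ j, ‖y j‖ = ‖v j‖ := fun j => rfl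
    simp only [this, hv, Real.sqrt_one]
  have hi : (inner ℂ y x : ℂ) = ∑ j, u j * (starRingEnd ℂ) (v j) := by
    rw [PiLp.inner_apply]
    congr 1
  calc ‖∑ j, u j * (starRingEnd ℂ) (v j)‖ = ‖(inner ℂ y x : ℂ)‖ := by rw [hi]
  _ ≤ ‖y‖ * ‖x‖ := norm_inner_le_norm y x
  _ = 1 := by rw [hx, hy, mul_one]

/-- with `μ = ∑ ρ_k δ_{ζ_k}` a discrete probability measure on `∂B^d`,
`F` its Herglotz-type transform and `G` the Cayley transform of `F`
(`(1 + G)/(1 - G) = F` on the ball), for every atom `ζ_n` of `μ` the radial limit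
`lim_{r→1⁻} |F(rζ_n)| = +∞` and consequently `lim_{r→1⁻} G(rζ_n) = 1`; in particular
`G(rζ) → 1` as `r → 1⁻` for `μ`-almost every `ζ ∈ ∂B^d`. -/
theorem stmt9 (d : ℕ) (ρ : ℕ → ℝ) (hρ : ∀ k, 0 < ρ k) (hsum : ∑' k, ρ k = 1)
    (ζ : ℕ → Fin d → ℂ) (hζ : ∀ k, ∑ j, ‖ζ k j‖ ^ 2 = 1)
    (hinj : Function.Injective ζ)
    (F G : (Fin d → ℂ) → ℂ)
    (hF : ∀ z, F z = ∑' k, (ρ k : ℂ) *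
      ((1 + ∑ j, z j * (starRingEnd ℂ) (ζ k j)) /
        (1 - ∑ j, z j * (starRingEnd ℂ) (ζ k j))))
    (hG : ∀ z, (∑ j, ‖z j‖ ^ 2 < 1) → (1 + G z) / (1 - G z) = F z) :
    (∀ n : ℕ,
      Tendsto (fun r : ℝ => ‖F (r • ζ n)‖) (nhdsWithin 1 (Set.Iio 1)) atTop ∧
      Tendsto (fun r : ℝ => G (r • ζ n)) (nhdsWithin 1 (Set.Iio 1)) (nhds 1)) ∧
    (∀ᵐ ξ ∂(Measure.sum fun k => (ENNReal.ofReal (ρ k)) • Measure.dirac (ζ k)),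
      Tendsto (fun r : ℝ => G (r • ξ)) (nhdsWithin 1 (Set.Iio 1)) (nhds 1)) := by
  have hsρ : Summable ρ := by
    by_contra h
    rw [tsum_eq_zero_of_not_summable h] at hsum
    norm_num at hsum
  -- key estimate
  have key : ∀ (n : ℕ) (r : ℝ), r ∈ Set.Ioo (0:ℝ) 1 →
      ρ n * ((1+r)/(1-r)) ≤ (F (r • ζ n)).re := by
    intro n r hr
    set c : ℕ → ℂ := fun k => ∑ j, ζ n j * (starRingEnd ℂ) (ζ k j) with hcdef
    have hck : ∀ k, ‖c k‖ ≤ 1 := fun k => aux_cs d (ζ n) (ζ k) (hζ n) (hζ k)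
    have hcn : c n = 1 := by
      have h1 : c n = ((∑ j, ‖ζ n j‖^2 : ℝ) : ℂ) := by
        rw [hcdef]
        push_cast
        apply Finset.sum_congr rfl
        intro j _
        rw [Complex.mul_conj, Complex.normSq_eq_norm_sq]
        norm_cast
      rw [h1, hζ n]; norm_num
    set term : ℕ → ℂ := fun k => (ρ k : ℂ) * ((1 + (r:ℂ) * c k)/(1 - (r:ℂ) * c k))
      with htermdef
    have hnormw : ∀ k, ‖(r:ℂ) * c k‖ ≤ r := by
      intro k
      rw [norm_mul, Complex.norm_real, Real.norm_eq_abs, abs_of_pos hr.1]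
      calc r * ‖c k‖ ≤ r * 1 := by
            exact mul_le_mul_of_nonneg_left (hck k) hr.1.le
      _ = r := mul_one r
    have hterm_norm : ∀ k, ‖term k‖ ≤ ρ k * ((1+r)/(1-r)) := by
      intro k
      rw [htermdef]
      simp only []
      rw [norm_mul, Complex.norm_real, Real.norm_eq_abs, abs_of_pos (hρ k)]
      exact mul_le_mul_of_nonneg_left
        (aux_norm_bound _ r (hnormw k) hr.2) (hρ k).le
    have hsummable : Summable term :=
      Summable.of_norm_bounded (hsρ.mul_right _) hterm_norm
    have hFeq : F (r • ζ n) = ∑' k, term k := by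
      rw [hF]
      congr 1; ext k
      have hin : ∑ j, (r • ζ n) j * (starRingEnd ℂ) (ζ k j) = (r:ℂ) * c k := by
        rw [hcdef, Finset.mul_sum]
        apply Finset.sum_congr rfl
        intro j _
        simp [Pi.smul_apply, Complex.real_smul, mul_assoc]
      rw [hin]
    have hhs : HasSum term (F (r • ζ n)) := by
      rw [hFeq]; exact hsummable.hasSum
    have hre : HasSum (fun k => (term k).re) ((F (r • ζ n)).re) :=
      hhs.mapL Complex.reCLM
    have hnonneg : ∀ j, j ≠ n → 0 ≤ (term j).re := by
      intro j _
      rw [htermdef]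
      simp only [Complex.re_ofReal_mul]
      exact mul_nonneg (hρ j).le
        (aux_re_nonneg _ (lt_of_le_of_lt (hnormw j) hr.2))
    have hle := le_hasSum hre n hnonneg
    have htn : (term n).re = ρ n * ((1+r)/(1-r)) := by
      rw [htermdef]
      simp only [hcn, mul_one]
      have : ((ρ n : ℂ) * ((1 + (r:ℂ))/(1 - (r:ℂ)))) =
          ((ρ n * ((1+r)/(1-r)) : ℝ) : ℂ) := by push_cast; ring
      rw [this, Complex.ofReal_re]
    linarith [hle, htn.symm.le, htn.le]
  -- divergence of the lower bound
  have hdiv : ∀ n : ℕ, Tendsto (fun r : ℝ => ρ n * ((1+r)/(1-r)))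
      (nhdsWithin 1 (Set.Iio 1)) atTop := by
    intro n
    apply Tendsto.const_mul_atTop (hρ n)
    have h1 : Tendsto (fun r:ℝ => 1 - r) (nhdsWithin 1 (Set.Iio 1))
        (nhdsWithin 0 (Set.Ioi 0)) := by
      apply tendsto_nhdsWithin_of_tendsto_nhds_of_eventually_within
      · have : Tendsto (fun r:ℝ => 1 - r) (nhds 1) (nhds 0) :=
          (continuous_const.sub continuous_id).tendsto' 1 0 (by norm_num)
        exact this.mono_left nhdsWithin_le_nhds
      · filter_upwards [self_mem_nhdsWithin] with r hr
        simp only [Set.mem_Iio] at hr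
        simp only [Set.mem_Ioi]; linarith
    have h2 : Tendsto (fun r:ℝ => (1-r)⁻¹) (nhdsWithin 1 (Set.Iio 1)) atTop :=
      tendsto_inv_nhdsGT_zero.comp h1
    have h3 : Tendsto (fun r:ℝ => 1 + r) (nhdsWithin 1 (Set.Iio 1)) (nhds 2) := by
      have : Tendsto (fun r:ℝ => 1 + r) (nhds 1) (nhds 2) :=
        (continuous_const.add continuous_id).tendsto' 1 2 (by norm_num)
      exact this.mono_left nhdsWithin_le_nhds
    have := Filter.Tendsto.pos_mul_atTop (by norm_num : (0:ℝ) < 2) h3 h2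
    simpa [div_eq_mul_inv] using this
  have hIoo : Set.Ioo (0:ℝ) 1 ∈ nhdsWithin (1:ℝ) (Set.Iio 1) :=
    Ioo_mem_nhdsLT_of_mem (by norm_num)
  -- part 1 : F diverges
  have part1F : ∀ n : ℕ, Tendsto (fun r : ℝ => ‖F (r • ζ n)‖)
      (nhdsWithin 1 (Set.Iio 1)) atTop := by
    intro n
    apply tendsto_atTop_mono' _ _ (hdiv n)
    filter_upwards [hIoo] with r hr
    calc ρ n * ((1+r)/(1-r)) ≤ (F (r • ζ n)).re := key n r hr
    _ ≤ ‖F (r • ζ n)‖ := Complex.re_le_norm _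
  -- bound on G
  have hGbound : ∀ (n : ℕ) (r : ℝ), r ∈ Set.Ioo (0:ℝ) 1 →
      ‖G (r • ζ n) - 1‖ ≤ 2 * (1-r) / ρ n := by
    intro n r hr
    set z : Fin d → ℂ := r • ζ n with hz
    have hball : ∑ j, ‖z j‖^2 < 1 := by
      have h1 : ∀ j, ‖z j‖^2 = r^2 * ‖ζ n j‖^2 := by
        intro j
        rw [hz]
        simp only [Pi.smul_apply, norm_smul, Real.norm_eq_abs]
        rw [mul_pow, sq_abs]
      rw [Finset.sum_congr rfl (fun j _ => h1 j), ← Finset.mul_sum, hζ n, mul_one]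
      nlinarith [hr.1, hr.2]
    have hkey := key n r hr
    have hfrac : 0 < (1+r)/(1-r) := by
      apply div_pos <;> [linarith [hr.1]; linarith [hr.2]]
    have hpos : 0 < (F z).re := lt_of_lt_of_le (mul_pos (hρ n) hfrac) hkey
    have hGeq := hG z hball
    have hGne : 1 - G z ≠ 0 := by
      intro h
      rw [h, div_zero] at hGeq
      rw [← hGeq] at hpos
      simp at hpos
    have heq : 1 + G z = F z * (1 - G z) := (div_eq_iff hGne).1 hGeq
    have hF1 : F z + 1 ≠ 0 := by
      intro h
      have h2 : F z = -1 := by linear_combination h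
      have h3 : (F z).re = -1 := by rw [h2]; simp
      linarith
    have hGform : G z - 1 = -2 / (F z + 1) := by
      rw [eq_div_iff hF1]
      linear_combination heq
    have hge : ρ n / (1-r) ≤ ‖F z + 1‖ := by
      have h1 : (F z + 1).re ≤ ‖F z + 1‖ := Complex.re_le_norm _
      have h2 : ρ n / (1-r) ≤ ρ n * ((1+r)/(1-r)) := by
        rw [← mul_div_assoc, div_le_div_iff_of_pos_right (by linarith [hr.2] : (0:ℝ) < 1-r)]
        nlinarith [hρ n, hr.1]
      simp only [Complex.add_re, Complex.one_re] at h1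
      linarith
    have hposd : 0 < ρ n / (1-r) := div_pos (hρ n) (by linarith [hr.2])
    rw [hGform, norm_div]
    have hn2 : ‖(-2 : ℂ)‖ = 2 := by norm_num
    rw [hn2]
    calc (2:ℝ) / ‖F z + 1‖ ≤ 2 / (ρ n / (1-r)) := by
          apply div_le_div_of_nonneg_left (by norm_num) hposd hge
    _ = 2 * (1-r) / ρ n := by
          field_simp
  -- part 1 : G tends to 1
  have part1G : ∀ n : ℕ, Tendsto (fun r : ℝ => G (r • ζ n))
      (nhdsWithin 1 (Set.Iio 1)) (nhds 1) := by
    intro n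
    have hzero : Tendsto (fun r : ℝ => G (r • ζ n) - 1)
        (nhdsWithin 1 (Set.Iio 1)) (nhds 0) := by
      apply squeeze_zero_norm' (a := fun r : ℝ => 2 * (1-r) / ρ n)
      · filter_upwards [hIoo] with r hr
        exact hGbound n r hr
      · have : Tendsto (fun r : ℝ => 2 * (1-r) / ρ n) (nhds 1) (nhds 0) := by
          have hc : Continuous (fun r : ℝ => 2 * (1-r) / ρ n) := by continuity
          have := hc.tendsto' 1 0 (by norm_num)
          exact this
        exact this.mono_left nhdsWithin_le_nhds
    have := hzero.add (tendsto_const_nhds (x := (1:ℂ)))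
    simpa using this
  refine ⟨fun n => ⟨part1F n, part1G n⟩, ?_⟩
  -- a.e. part
  rw [ae_iff]
  apply measure_mono_null
    (t := (Set.range ζ)ᶜ)
  · intro ξ hξ
    simp only [Set.mem_setOf_eq] at hξ
    simp only [Set.mem_compl_iff, Set.mem_range]
    rintro ⟨k, rfl⟩
    exact hξ (part1G k)
  · have hm : MeasurableSet ((Set.range ζ)ᶜ) :=
      (Set.countable_range ζ).measurableSet.compl
    rw [Measure.sum_apply _ hm]
    have : ∀ k : ℕ, ((ENNReal.ofReal (ρ k)) • Measure.dirac (ζ k)) ((Set.range ζ)ᶜ) = 0 := by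
      intro k
      rw [Measure.smul_apply, Measure.dirac_apply]
      have : ζ k ∉ (Set.range ζ)ᶜ := by
        simp [Set.mem_range]
      rw [Set.indicator_of_notMem this]
      simp
    simp only [this, tsum_zero]
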